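/- As an identity of formal power series over the rationals, (1 − x)²(1 − x⁴)(1 − x⁶) · Σ_{t≥0} c₃(t) xᵗ = 8x¹⁰(2x² + 1); equivalently, the generating function Σ_{t≥0} c₃(t) xᵗ equals 8x¹⁰(2x² + 1) / ((1 − x)²(1 − x⁴)(1 − x⁶)). -/

import Mathlib

/-- A 3×3 magic square with entries bounded above (strictly) by `t`: pairwise distinct
positive integer entries less than `t`, with all row sums, column sums, and both main
diagonal sums equal to one another. -/
def IsBoundedMagicSquare3 (t : ℕ) (M : Matrix (Fin 3) (Fin 3) ℕ) : Prop :=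
  (∀ i j, 0 < M i j ∧ M i j < t) ∧
  (Function.Injective fun p : Fin 3 × Fin 3 => M p.1 p.2) ∧
  ∃ s, (∀ i, ∑ j, M i j = s) ∧ (∀ j, ∑ i, M i j = s) ∧
    M 0 0 + M 1 1 + M 2 2 = s ∧ M 0 2 + M 1 1 + M 2 0 = s

/-- The number of 3×3 magic squares all of whose entries are less than `t`. -/
noncomputable def c3 (t : ℕ) : ℕ :=
  Set.ncard {M : Matrix (Fin 3) (Fin 3) ℕ | IsBoundedMagicSquare3 t M}

/-! ### Auxiliary definitions -/

def Nm (m : ℕ) : ℕ :=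
  4 * (m - 1) - (if m % 2 = 0 then 4 else 0) - (if m % 3 = 0 then 8 else 0)

def Sfun (t : ℕ) : ℕ := ∑ m ∈ Finset.range t, Nm m * (t - 1 - 2 * m)

def gfun (n : ℕ) : ℕ := if n % 2 = 0 then Nm (n / 2 - 1) else 0

def goodPair (p : ℤ × ℤ) : Prop :=
  p.1 ≠ 0 ∧ p.2 ≠ 0 ∧ p.1 ≠ p.2 ∧ p.1 ≠ -p.2 ∧ p.1 ≠ 2 * p.2 ∧ p.1 ≠ -(2 * p.2) ∧
    p.2 ≠ 2 * p.1 ∧ p.2 ≠ -(2 * p.1)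

instance : DecidablePred goodPair := fun p => by unfold goodPair; infer_instance

noncomputable def pairsm (m : ℕ) : Finset (ℤ × ℤ) :=
  ((Finset.Icc (-(m : ℤ)) m) ×ˢ (Finset.Icc (-(m : ℤ)) m)).filter
    (fun p => goodPair p ∧ p.1.natAbs + p.2.natAbs = m)

def qset (m : ℕ) : Finset ℕ :=
  (Finset.Ioo 0 m).filter fun a => 2 * a ≠ m ∧ 3 * a ≠ m ∧ 3 * a ≠ 2 * m

noncomputable def paramSet (t : ℕ) : Finset ((ℤ × ℤ) × ℕ) :=
  (((Finset.Icc (-(t : ℤ)) t) ×ˢ (Finset.Icc (-(t : ℤ)) t)) ×ˢ Finset.range t).filter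
    (fun x => goodPair x.1 ∧ x.1.1.natAbs + x.1.2.natAbs < x.2 ∧
      x.2 + x.1.1.natAbs + x.1.2.natAbs < t)

def coefA : Fin 3 → Fin 3 → ℤ
  | 0, 0 => 1 | 0, 1 => -1 | 0, 2 => 0
  | 1, 0 => -1 | 1, 1 => 0 | 1, 2 => 1
  | 2, 0 => 0 | 2, 1 => 1 | 2, 2 => -1

def coefB : Fin 3 → Fin 3 → ℤ
  | 0, 0 => 0 | 0, 1 => -1 | 0, 2 => 1
  | 1, 0 => 1 | 1, 1 => 0 | 1, 2 => -1
  | 2, 0 => -1 | 2, 1 => 1 | 2, 2 => 0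

def mat (a b : ℤ) (c : ℕ) : Matrix (Fin 3) (Fin 3) ℕ :=
  Matrix.of fun i j => ((c : ℤ) + coefA i j * a + coefB i j * b).toNat

/-! ### Counting the admissible pairs -/
theorem qset_card (m : ℕ) (hm : 1 ≤ m) :
    (qset m).card = (m - 1) - (if m % 2 = 0 then 1 else 0) - 2 * (if m % 3 = 0 then 1 else 0) := by
  classical
  have key := Finset.card_filter_add_card_filter_not
    (s := Finset.Ioo 0 m) (p := fun a => 2 * a ≠ m ∧ 3 * a ≠ m ∧ 3 * a ≠ 2 * m)
  have hIoo : (Finset.Ioo 0 m).card = m - 1 := by rw [Nat.card_Ioo]; omega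
  have hbad : ((Finset.Ioo 0 m).filter fun a => ¬(2 * a ≠ m ∧ 3 * a ≠ m ∧ 3 * a ≠ 2 * m)).card
      = (if m % 2 = 0 then 1 else 0) + 2 * (if m % 3 = 0 then 1 else 0) := by
    have hun : ((Finset.Ioo 0 m).filter fun a => ¬(2 * a ≠ m ∧ 3 * a ≠ m ∧ 3 * a ≠ 2 * m))
        = ((Finset.Ioo 0 m).filter fun a => 2 * a = m) ∪
          ((Finset.Ioo 0 m).filter fun a => 3 * a = m) ∪
          ((Finset.Ioo 0 m).filter fun a => 3 * a = 2 * m) := by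
      ext a
      simp only [Finset.mem_filter, Finset.mem_union, Finset.mem_Ioo]
      tauto
    have c1 : ((Finset.Ioo 0 m).filter fun a => 2 * a = m).card
        = if m % 2 = 0 then 1 else 0 := by
      split_ifs with h
      · rw [show (Finset.Ioo 0 m).filter (fun a => 2 * a = m) = {m / 2} by
          ext a; simp only [Finset.mem_filter, Finset.mem_Ioo, Finset.mem_singleton]; omega]
        rfl
      · rw [Finset.filter_eq_empty_iff.mpr (by intro a ha; simp at ha ⊢; omega)]; rfl
    have c2 : ((Finset.Ioo 0 m).filter fun a => 3 * a = m).card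
        = if m % 3 = 0 then 1 else 0 := by
      split_ifs with h
      · rw [show (Finset.Ioo 0 m).filter (fun a => 3 * a = m) = {m / 3} by
          ext a; simp only [Finset.mem_filter, Finset.mem_Ioo, Finset.mem_singleton]; omega]
        rfl
      · rw [Finset.filter_eq_empty_iff.mpr (by intro a ha; simp at ha ⊢; omega)]; rfl
    have c3' : ((Finset.Ioo 0 m).filter fun a => 3 * a = 2 * m).card
        = if m % 3 = 0 then 1 else 0 := by
      split_ifs with h
      · rw [show (Finset.Ioo 0 m).filter (fun a => 3 * a = 2 * m) = {2 * m / 3} by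
          ext a; simp only [Finset.mem_filter, Finset.mem_Ioo, Finset.mem_singleton]; omega]
        rfl
      · rw [Finset.filter_eq_empty_iff.mpr (by intro a ha; simp at ha ⊢; omega)]; rfl
    have d12 : Disjoint ((Finset.Ioo 0 m).filter fun a => 2 * a = m)
        ((Finset.Ioo 0 m).filter fun a => 3 * a = m) := by
      rw [Finset.disjoint_left]; intro a ha hb; simp at ha hb; omega
    have d123 : Disjoint (((Finset.Ioo 0 m).filter fun a => 2 * a = m) ∪
        ((Finset.Ioo 0 m).filter fun a => 3 * a = m))
        ((Finset.Ioo 0 m).filter fun a => 3 * a = 2 * m) := by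
      rw [Finset.disjoint_left]; intro a ha hb; simp at ha hb; omega
    rw [hun, Finset.card_union_of_disjoint d123, Finset.card_union_of_disjoint d12, c1, c2, c3']
    split_ifs <;> ring
  unfold qset
  omega

theorem pairsm_card (m : ℕ) : (pairsm m).card = Nm m := by
  classical
  rcases Nat.eq_zero_or_pos m with rfl | hm
  · rw [show pairsm 0 = ∅ by
      ext p; simp only [pairsm, Finset.mem_filter, Finset.notMem_empty, iff_false]
      rintro ⟨-, ⟨h1, -⟩, hs⟩; omega]
    rfl
  · have himg : pairsm m =
        ((qset m).image (fun a : ℕ => ((a : ℤ), (m : ℤ) - a)) ∪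
         (qset m).image (fun a : ℕ => ((a : ℤ), -((m : ℤ) - a)))) ∪
        ((qset m).image (fun a : ℕ => (-(a : ℤ), (m : ℤ) - a)) ∪
         (qset m).image (fun a : ℕ => (-(a : ℤ), -((m : ℤ) - a)))) := by
      ext ⟨x, y⟩
      rw [pairsm, Finset.mem_filter]
      simp only [pairsm, qset, goodPair, Finset.mem_filter, Finset.mem_product,
        Finset.mem_union, Finset.mem_image, Finset.mem_Icc, Finset.mem_Ioo,
        Prod.mk.injEq]
      constructor
      · rintro ⟨⟨hx, hy⟩, ⟨g1, g2, g3, g4, g5, g6, g7, g8⟩, hs⟩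
        rcases lt_or_gt_of_ne g1 with hx0 | hx0 <;> rcases lt_or_gt_of_ne g2 with hy0 | hy0
        · exact Or.inr (Or.inr ⟨x.natAbs, ⟨by omega, by omega, by omega, by omega⟩,
            by omega, by omega⟩)
        · exact Or.inr (Or.inl ⟨x.natAbs, ⟨by omega, by omega, by omega, by omega⟩,
            by omega, by omega⟩)
        · exact Or.inl (Or.inr ⟨x.natAbs, ⟨by omega, by omega, by omega, by omega⟩,
            by omega, by omega⟩)
        · exact Or.inl (Or.inl ⟨x.natAbs, ⟨by omega, by omega, by omega, by omega⟩,
            by omega, by omega⟩)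
      · rintro ((⟨a, ⟨⟨h0, hlt⟩, hc1, hc2, hc3⟩, hx, hy⟩ | ⟨a, ⟨⟨h0, hlt⟩, hc1, hc2, hc3⟩, hx, hy⟩) |
          (⟨a, ⟨⟨h0, hlt⟩, hc1, hc2, hc3⟩, hx, hy⟩ | ⟨a, ⟨⟨h0, hlt⟩, hc1, hc2, hc3⟩, hx, hy⟩)) <;>
          refine ⟨⟨⟨by omega, by omega⟩, by omega, by omega⟩,
            ⟨by omega, by omega, by omega, by omega, by omega, by omega, by omega, by omega⟩,
            by omega⟩
    have i1 : Function.Injective (fun a : ℕ => ((a : ℤ), (m : ℤ) - a)) := by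
      intro a b h; simp only [Prod.mk.injEq] at h; omega
    have i2 : Function.Injective (fun a : ℕ => ((a : ℤ), -((m : ℤ) - a))) := by
      intro a b h; simp only [Prod.mk.injEq] at h; omega
    have i3 : Function.Injective (fun a : ℕ => (-(a : ℤ), (m : ℤ) - a)) := by
      intro a b h; simp only [Prod.mk.injEq] at h; omega
    have i4 : Function.Injective (fun a : ℕ => (-(a : ℤ), -((m : ℤ) - a))) := by
      intro a b h; simp only [Prod.mk.injEq] at h; omega
    have hq : ∀ a ∈ qset m, 0 < a ∧ a < m := by
      intro a ha; simp only [qset, Finset.mem_filter, Finset.mem_Ioo] at ha; exact ha.1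
    have d1 : Disjoint ((qset m).image (fun a : ℕ => ((a : ℤ), (m : ℤ) - a)))
        ((qset m).image (fun a : ℕ => ((a : ℤ), -((m : ℤ) - a)))) := by
      rw [Finset.disjoint_left]
      rintro ⟨x, y⟩ h1 h2
      simp only [Finset.mem_image, Prod.mk.injEq] at h1 h2
      obtain ⟨a, ha, hxa, hya⟩ := h1; obtain ⟨b, hb, hxb, hyb⟩ := h2
      have := hq a ha; have := hq b hb; omega
    have d2 : Disjoint ((qset m).image (fun a : ℕ => (-(a : ℤ), (m : ℤ) - a)))
        ((qset m).image (fun a : ℕ => (-(a : ℤ), -((m : ℤ) - a)))) := by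
      rw [Finset.disjoint_left]
      rintro ⟨x, y⟩ h1 h2
      simp only [Finset.mem_image, Prod.mk.injEq] at h1 h2
      obtain ⟨a, ha, hxa, hya⟩ := h1; obtain ⟨b, hb, hxb, hyb⟩ := h2
      have := hq a ha; have := hq b hb; omega
    have d3 : Disjoint (((qset m).image (fun a : ℕ => ((a : ℤ), (m : ℤ) - a)) ∪
         (qset m).image (fun a : ℕ => ((a : ℤ), -((m : ℤ) - a)))))
        (((qset m).image (fun a : ℕ => (-(a : ℤ), (m : ℤ) - a)) ∪
         (qset m).image (fun a : ℕ => (-(a : ℤ), -((m : ℤ) - a))))) := by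
      rw [Finset.disjoint_left]
      rintro ⟨x, y⟩ h1 h2
      simp only [Finset.mem_image, Finset.mem_union, Prod.mk.injEq] at h1 h2
      rcases h1 with ⟨a, ha, hxa, hya⟩ | ⟨a, ha, hxa, hya⟩ <;>
        rcases h2 with ⟨b, hb, hxb, hyb⟩ | ⟨b, hb, hxb, hyb⟩ <;>
        (have := hq a ha; have := hq b hb; omega)
    rw [himg, Finset.card_union_of_disjoint d3, Finset.card_union_of_disjoint d1,
      Finset.card_union_of_disjoint d2, Finset.card_image_of_injective _ i1,
      Finset.card_image_of_injective _ i2, Finset.card_image_of_injective _ i3,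
      Finset.card_image_of_injective _ i4, qset_card m hm]
    unfold Nm
    split_ifs <;> omega

theorem paramSet_card (t : ℕ) : (paramSet t).card = Sfun t := by
  classical
  have hmap : ∀ x ∈ paramSet t, x.1.1.natAbs + x.1.2.natAbs ∈ Finset.range t := by
    rintro ⟨⟨a, b⟩, c⟩ hx
    simp only [paramSet, Finset.mem_filter] at hx
    simp only [Finset.mem_range]
    have := hx.2.2
    simp only [Finset.mem_product, Finset.mem_range] at hx
    omega
  rw [Finset.card_eq_sum_card_fiberwise hmap]
  unfold Sfun
  refine Finset.sum_congr rfl ?_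
  intro m hm
  simp only [Finset.mem_range] at hm
  have hfiber : (paramSet t).filter (fun x => x.1.1.natAbs + x.1.2.natAbs = m) =
      pairsm m ×ˢ Finset.Ioo m (t - m) := by
    ext ⟨⟨a, b⟩, c⟩
    simp only [paramSet, pairsm, Finset.mem_filter, Finset.mem_product, Finset.mem_range,
      Finset.mem_Icc, Finset.mem_Ioo]
    constructor
    · rintro ⟨⟨⟨⟨⟨ha1, ha2⟩, hb1, hb2⟩, hc⟩, hg, hlt1, hlt2⟩, hs⟩
      exact ⟨⟨⟨⟨by omega, by omega⟩, by omega, by omega⟩, hg, hs⟩, by omega, by omega⟩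
    · rintro ⟨⟨⟨⟨ha1, ha2⟩, hb1, hb2⟩, hg, hs⟩, hc1, hc2⟩
      exact ⟨⟨⟨⟨⟨by omega, by omega⟩, by omega, by omega⟩, by omega⟩, hg, by omega, by omega⟩,
        by omega⟩
  rw [hfiber,Finset.card_product, pairsm_card, Nat.card_Ioo]
  congr 1
  omega

theorem Sfun_ext (j k : ℕ) (hj : j ≤ k) :
    Sfun j = ∑ m ∈ Finset.range k, Nm m * (j - 1 - 2 * m) := by
  unfold Sfun
  refine Finset.sum_subset (Finset.range_subset_range.mpr hj) ?_
  intro m hm hnm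
  simp only [Finset.mem_range] at hm hnm
  have : j - 1 - 2 * m = 0 := by omega
  simp [this]

theorem Sfun_rec (k : ℕ) : Sfun (k + 2) + Sfun k = 2 * Sfun (k + 1) + gfun (k + 2) := by
  rw [Sfun_ext (k + 2) (k + 2) le_rfl, Sfun_ext k (k + 2) (by omega),
    Sfun_ext (k + 1) (k + 2) (by omega)]
  rw [← Finset.sum_add_distrib, Finset.mul_sum]
  have hg : gfun (k + 2) = ∑ m ∈ Finset.range (k + 2), (if 2 * m = k then Nm m else 0) := by
    rcases Nat.even_or_odd k with ⟨i, rfl⟩ | ⟨i, rfl⟩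
    · have : ∀ m ∈ Finset.range (i + i + 2), (if 2 * m = i + i then Nm m else 0)
          = if m = i then Nm m else 0 := by
        intro m _; congr 1; simp only [eq_iff_iff]; omega
      rw [Finset.sum_congr rfl this, Finset.sum_ite_eq' (Finset.range (i + i + 2)) i Nm]
      have hi : i ∈ Finset.range (i + i + 2) := by simp; omega
      rw [if_pos hi]
      unfold gfun
      rw [if_pos (by omega)]
      congr 1
      omega
    · have : ∀ m ∈ Finset.range (2 * i + 1 + 2), (if 2 * m = 2 * i + 1 then Nm m else 0) = 0 := by
        intro m _; rw [if_neg]; omega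
      rw [Finset.sum_congr rfl this, Finset.sum_const, smul_zero]
      unfold gfun
      rw [if_neg (by omega)]
  rw [hg, ← Finset.sum_add_distrib]
  refine Finset.sum_congr rfl ?_
  intro m _
  split_ifs with h
  · have harith : (k + 2 - 1 - 2 * m) + (k - 1 - 2 * m) = 2 * (k + 1 - 1 - 2 * m) + 1 := by
      omega
    calc Nm m * (k + 2 - 1 - 2 * m) + Nm m * (k - 1 - 2 * m)
        = Nm m * ((k + 2 - 1 - 2 * m) + (k - 1 - 2 * m)) := (mul_add _ _ _).symm
      _ = Nm m * (2 * (k + 1 - 1 - 2 * m) + 1) := by rw [harith]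
      _ = 2 * (Nm m * (k + 1 - 1 - 2 * m)) + Nm m := by
          rw [mul_add, mul_one, mul_left_comm]
  · have harith : (k + 2 - 1 - 2 * m) + (k - 1 - 2 * m) = 2 * (k + 1 - 1 - 2 * m) := by
      omega
    calc Nm m * (k + 2 - 1 - 2 * m) + Nm m * (k - 1 - 2 * m)
        = Nm m * ((k + 2 - 1 - 2 * m) + (k - 1 - 2 * m)) := (mul_add _ _ _).symm
      _ = Nm m * (2 * (k + 1 - 1 - 2 * m)) := by rw [harith]
      _ = 2 * (Nm m * (k + 1 - 1 - 2 * m)) + 0 := by rw [mul_left_comm, add_zero]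

theorem Nm_rec (i : ℕ) : Nm (i + 6) + Nm (i + 1) = Nm (i + 4) + Nm (i + 3) := by
  simp only [Nm]
  rw [show (i + 6) % 2 = i % 2 from by omega, show (i + 4) % 2 = i % 2 from by omega,
    show (i + 3) % 2 = (i + 1) % 2 from by omega, show (i + 6) % 3 = i % 3 from by omega,
    show (i + 3) % 3 = i % 3 from by omega, show (i + 4) % 3 = (i + 1) % 3 from by omega]
  split_ifs <;> omega

theorem gfun_two_mul (j : ℕ) : gfun (2 * j + 2) = Nm j := by
  unfold gfun
  rw [if_pos (by omega)]
  congr 1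
  omega

theorem gfun_odd (j : ℕ) : gfun (2 * j + 1) = 0 := by
  unfold gfun
  rw [if_neg (by omega)]

theorem gfun_rec (m : ℕ) : gfun (m + 14) + gfun (m + 4) = gfun (m + 10) + gfun (m + 8) := by
  rcases Nat.even_or_odd m with ⟨i, rfl⟩ | ⟨i, rfl⟩
  · rw [show i + i + 14 = 2 * (i + 6) + 2 by omega, show i + i + 4 = 2 * (i + 1) + 2 by omega,
      show i + i + 10 = 2 * (i + 4) + 2 by omega, show i + i + 8 = 2 * (i + 3) + 2 by omega,
      gfun_two_mul, gfun_two_mul, gfun_two_mul, gfun_two_mul]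
    exact Nm_rec i
  · rw [show 2 * i + 1 + 14 = 2 * (i + 7) + 1 by omega, show 2 * i + 1 + 4 = 2 * (i + 2) + 1 by omega,
      show 2 * i + 1 + 10 = 2 * (i + 5) + 1 by omega, show 2 * i + 1 + 8 = 2 * (i + 4) + 1 by omega,
      gfun_odd, gfun_odd, gfun_odd, gfun_odd]


open PowerSeries in
theorem P1 : PowerSeries.mk (fun t => (Sfun t : ℚ)) * (1 - PowerSeries.X) ^ 2 =
    PowerSeries.mk (fun n => (gfun n : ℚ)) := by
  have h2 : (2 : PowerSeries ℚ) = PowerSeries.C (R := ℚ) 2 := by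
    rw [map_ofNat]
  have key : PowerSeries.mk (fun t => (Sfun t : ℚ)) +
      PowerSeries.mk (fun t => (Sfun t : ℚ)) * PowerSeries.X ^ 2 =
      PowerSeries.mk (fun n => (gfun n : ℚ)) +
        PowerSeries.C (R := ℚ) 2 * (PowerSeries.mk (fun t => (Sfun t : ℚ)) * PowerSeries.X ^ 1) := by
    ext n
    simp only [map_add, PowerSeries.coeff_mk, PowerSeries.coeff_C_mul,
      PowerSeries.coeff_mul_X_pow']
    match n with
    | 0 =>
      norm_num
      simp [Sfun, gfun, Nm]
    | 1 =>
      norm_num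
      simp [Sfun, gfun, Nm, Finset.sum_range_one]
    | (k + 2) =>
      rw [if_pos (by omega : 2 ≤ k + 2), if_pos (by omega : 1 ≤ k + 2)]
      have h := Sfun_rec k
      have hc := congrArg (Nat.cast : ℕ → ℚ) h
      push_cast at hc
      rw [show k + 2 - 2 = k from by omega, show k + 2 - 1 = k + 1 from by omega]
      linarith
  have expand : PowerSeries.mk (fun t => (Sfun t : ℚ)) * (1 - PowerSeries.X) ^ 2 =
      (PowerSeries.mk (fun t => (Sfun t : ℚ)) +
        PowerSeries.mk (fun t => (Sfun t : ℚ)) * PowerSeries.X ^ 2) -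
        PowerSeries.C (R := ℚ) 2 * (PowerSeries.mk (fun t => (Sfun t : ℚ)) * PowerSeries.X ^ 1) := by
    rw [← h2]; ring
  rw [expand, key]; ring

open PowerSeries in
theorem P2 : PowerSeries.mk (fun n => (gfun n : ℚ)) *
    ((1 - PowerSeries.X ^ 4) * (1 - PowerSeries.X ^ 6)) =
    PowerSeries.C (R := ℚ) 8 * PowerSeries.X ^ 10 + PowerSeries.C (R := ℚ) 16 * PowerSeries.X ^ 12 := by
  have key : PowerSeries.mk (fun n => (gfun n : ℚ)) +
      PowerSeries.mk (fun n => (gfun n : ℚ)) * PowerSeries.X ^ 10 =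
      (PowerSeries.C (R := ℚ) 8 * PowerSeries.X ^ 10 + PowerSeries.C (R := ℚ) 16 * PowerSeries.X ^ 12) +
        (PowerSeries.mk (fun n => (gfun n : ℚ)) * PowerSeries.X ^ 4 +
         PowerSeries.mk (fun n => (gfun n : ℚ)) * PowerSeries.X ^ 6) := by
    ext n
    simp only [map_add, PowerSeries.coeff_mk, PowerSeries.coeff_C_mul,
      PowerSeries.coeff_mul_X_pow', PowerSeries.coeff_C]
    by_cases hn : 14 ≤ n
    · obtain ⟨m, rfl⟩ := Nat.exists_eq_add_of_le hn
      rw [if_pos (by omega : 10 ≤ 14 + m), if_pos (by omega : 4 ≤ 14 + m),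
        if_pos (by omega : 6 ≤ 14 + m), if_pos (by omega : 12 ≤ 14 + m),
        if_neg (by omega : ¬(14 + m - 10 = 0)), if_neg (by omega : ¬(14 + m - 12 = 0))]
      rw [show 14 + m - 10 = m + 4 from by omega, show 14 + m - 4 = m + 10 from by omega,
        show 14 + m - 6 = m + 8 from by omega, show 14 + m = m + 14 from by omega]
      have h := gfun_rec m
      have hc := congrArg (Nat.cast : ℕ → ℚ) h
      push_cast at hc
      simp only [ite_self]
      linarith
    · interval_cases n <;> norm_num [gfun, Nm]
  linear_combination key

/-! ### Magic squares correspond to parameters -/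

theorem magic_to_param {t : ℕ} {M : Matrix (Fin 3) (Fin 3) ℕ}
    (h : IsBoundedMagicSquare3 t M) :
    ∃ a b : ℤ, ∃ c : ℕ, goodPair (a, b) ∧ a.natAbs + b.natAbs < c ∧
      c + a.natAbs + b.natAbs < t ∧ M = mat a b c := by
  obtain ⟨hpos, hinj, s, hr, hc, hd, ha⟩ := h
  have hr0 := hr 0; have hr1 := hr 1; have hr2 := hr 2
  have hc0 := hc 0; have hc1 := hc 1; have hc2 := hc 2
  simp only [Fin.sum_univ_three] at hr0 hr1 hr2 hc0 hc1 hc2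
  set c : ℕ := M 1 1 with hcdef
  refine ⟨(M 0 0 : ℤ) - c, (M 0 2 : ℤ) - c, c, ?_, ?_, ?_, ?_⟩
  · have h1 : M 0 0 ≠ M 2 2 := fun hh =>
      absurd (hinj (a₁ := (0,0)) (a₂ := (2,2)) hh) (by decide)
    have h2 : M 0 2 ≠ M 2 0 := fun hh =>
      absurd (hinj (a₁ := (0,2)) (a₂ := (2,0)) hh) (by decide)
    have h3 : M 0 0 ≠ M 0 2 := fun hh =>
      absurd (hinj (a₁ := (0,0)) (a₂ := (0,2)) hh) (by decide)
    have h4 : M 0 0 ≠ M 2 0 := fun hh =>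
      absurd (hinj (a₁ := (0,0)) (a₂ := (2,0)) hh) (by decide)
    have h5 : M 1 2 ≠ M 0 2 := fun hh =>
      absurd (hinj (a₁ := (1,2)) (a₂ := (0,2)) hh) (by decide)
    have h6 : M 2 1 ≠ M 2 0 := fun hh =>
      absurd (hinj (a₁ := (2,1)) (a₂ := (2,0)) hh) (by decide)
    have h7 : M 1 0 ≠ M 0 0 := fun hh =>
      absurd (hinj (a₁ := (1,0)) (a₂ := (0,0)) hh) (by decide)
    have h8 : M 2 1 ≠ M 2 2 := fun hh =>
      absurd (hinj (a₁ := (2,1)) (a₂ := (2,2)) hh) (by decide)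
    refine ⟨?_, ?_, ?_, ?_, ?_, ?_, ?_, ?_⟩ <;> simp only [] <;> omega
  · have p01 := hpos 0 1; have p10 := hpos 1 0; have p12 := hpos 1 2
    have p21 := hpos 2 1
    omega
  · have p01 := hpos 0 1; have p10 := hpos 1 0; have p12 := hpos 1 2
    have p21 := hpos 2 1
    have p00 := hpos 0 0
    omega
  · ext i j
    fin_cases i <;> fin_cases j <;>
      simp only [mat, Matrix.of_apply, coefA, coefB, Fin.zero_eta, Fin.mk_one,
        Fin.reduceFinMk] <;>
      omega

set_option maxHeartbeats 1000000 in
theorem mat_inj (a b : ℤ) (c : ℕ) (h1 : a + b < c) (h2 : a - b < c) (h3 : b - a < c)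
    (h4 : -a - b < c)
    (g1 : a ≠ 0) (g2 : b ≠ 0) (g3 : a ≠ b) (g4 : a ≠ -b) (g5 : a ≠ 2 * b)
    (g6 : a ≠ -(2 * b)) (g7 : b ≠ 2 * a) (g8 : b ≠ -(2 * a)) :
    Function.Injective fun p : Fin 3 × Fin 3 => mat a b c p.1 p.2 := by
  rintro ⟨pi, pj⟩ ⟨qi, qj⟩ h
  simp only [mat, Matrix.of_apply] at h
  fin_cases pi <;> fin_cases pj <;> fin_cases qi <;> fin_cases qj <;>
    simp only [coefA, coefB] at h <;>
    first
      | rfl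
      | (exfalso; omega)

theorem param_to_magic {t : ℕ} {a b : ℤ} {c : ℕ} (hg : goodPair (a, b))
    (hb1 : a.natAbs + b.natAbs < c) (hb2 : c + a.natAbs + b.natAbs < t) :
    IsBoundedMagicSquare3 t (mat a b c) := by
  obtain ⟨g1, g2, g3, g4, g5, g6, g7, g8⟩ := hg
  simp only [] at g1 g2 g3 g4 g5 g6 g7 g8
  have l1 : a + b < c := by omega
  have l2 : a - b < c := by omega
  have l3 : b - a < c := by omega
  have l4 : -a - b < c := by omega
  have u1 : (c : ℤ) + (a + b) < t := by omega
  have u2 : (c : ℤ) + (a - b) < t := by omega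
  have u3 : (c : ℤ) + (b - a) < t := by omega
  have u4 : (c : ℤ) + (-a - b) < t := by omega
  clear hb1 hb2
  refine ⟨?_, mat_inj a b c l1 l2 l3 l4 g1 g2 g3 g4 g5 g6 g7 g8, 3 * c, ?_, ?_, ?_, ?_⟩
  · intro i j
    fin_cases i <;> fin_cases j <;>
      simp only [mat, Matrix.of_apply, coefA, coefB, Fin.zero_eta, Fin.mk_one,
        Fin.reduceFinMk] <;>
      omega
  · intro i
    fin_cases i <;>
      simp only [Fin.sum_univ_three, mat, Matrix.of_apply, coefA, coefB, Fin.zero_eta,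
        Fin.mk_one, Fin.reduceFinMk] <;>
      omega
  · intro j
    fin_cases j <;>
      simp only [Fin.sum_univ_three, mat, Matrix.of_apply, coefA, coefB, Fin.zero_eta,
        Fin.mk_one, Fin.reduceFinMk] <;>
      omega
  · simp only [mat, Matrix.of_apply, coefA, coefB]
    omega
  · simp only [mat, Matrix.of_apply, coefA, coefB]
    omega

theorem c3_eq (t : ℕ) : c3 t = Sfun t := by
  classical
  have hset : {M : Matrix (Fin 3) (Fin 3) ℕ | IsBoundedMagicSquare3 t M} =
      ↑((paramSet t).image fun x => mat x.1.1 x.1.2 x.2) := by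
    ext M
    simp only [Set.mem_setOf_eq, Finset.coe_image, Set.mem_image, Finset.mem_coe]
    constructor
    · intro h
      obtain ⟨a, b, c, hg, hb1, hb2, rfl⟩ := magic_to_param h
      refine ⟨((a, b), c), ?_, rfl⟩
      simp only [paramSet, Finset.mem_filter, Finset.mem_product, Finset.mem_Icc,
        Finset.mem_range]
      exact ⟨⟨⟨⟨by omega, by omega⟩, by omega, by omega⟩, by omega⟩, hg, hb1, hb2⟩
    · rintro ⟨⟨⟨a, b⟩, c⟩, hx, rfl⟩
      simp only [paramSet, Finset.mem_filter] at hx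
      exact param_to_magic hx.2.1 hx.2.2.1 hx.2.2.2
  have hinj : Set.InjOn (fun x : (ℤ × ℤ) × ℕ => mat x.1.1 x.1.2 x.2) ↑(paramSet t) := by
    rintro ⟨⟨a, b⟩, c⟩ hx ⟨⟨a', b'⟩, c'⟩ hy h
    simp only [Finset.mem_coe, paramSet, Finset.mem_filter] at hx hy
    have hbx := hx.2.2.1
    have hby := hy.2.2.1
    simp only [] at h
    have h11 := congrFun (congrFun h 1) 1
    have h00 := congrFun (congrFun h 0) 0
    have h02 := congrFun (congrFun h 0) 2
    simp only [mat, Matrix.of_apply, coefA, coefB] at h11 h00 h02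
    simp only [Prod.mk.injEq]
    refine ⟨⟨?_, ?_⟩, ?_⟩ <;> omega
  rw [c3, hset, Set.ncard_coe_finset, Finset.card_image_of_injOn hinj, paramSet_card]

open PowerSeries in
theorem c3_generating_function :
    (1 - (PowerSeries.X : PowerSeries ℚ)) ^ 2 * (1 - PowerSeries.X ^ 4) *
        (1 - PowerSeries.X ^ 6) * PowerSeries.mk (fun t => (c3 t : ℚ)) =
      8 * PowerSeries.X ^ 10 * (2 * PowerSeries.X ^ 2 + 1) := by
  have hmk : PowerSeries.mk (fun t => (c3 t : ℚ)) = PowerSeries.mk (fun t => (Sfun t : ℚ)) := by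
    ext n; simp only [PowerSeries.coeff_mk, c3_eq]
  have h16 : (PowerSeries.C (R := ℚ)) 16 = (PowerSeries.C (R := ℚ)) 8 * (PowerSeries.C (R := ℚ)) 2 := by
    rw [← map_mul]; norm_num
  calc (1 - (PowerSeries.X : PowerSeries ℚ)) ^ 2 * (1 - PowerSeries.X ^ 4) *
        (1 - PowerSeries.X ^ 6) * PowerSeries.mk (fun t => (c3 t : ℚ))
      = PowerSeries.mk (fun t => (Sfun t : ℚ)) * (1 - PowerSeries.X) ^ 2 *
          ((1 - PowerSeries.X ^ 4) * (1 - PowerSeries.X ^ 6)) := by rw [hmk]; ring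
    _ = PowerSeries.mk (fun n => (gfun n : ℚ)) *
          ((1 - PowerSeries.X ^ 4) * (1 - PowerSeries.X ^ 6)) := by rw [P1]
    _ = PowerSeries.C (R := ℚ) 8 * PowerSeries.X ^ 10 + PowerSeries.C (R := ℚ) 16 * PowerSeries.X ^ 12 := P2
    _ = 8 * PowerSeries.X ^ 10 * (2 * PowerSeries.X ^ 2 + 1) := by
        rw [h16, map_ofNat, map_ofNat]; ring
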